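/- arXiv:1112.1999 — 2 statements merged into one kernel-verified Lean document; each statement's English description precedes it below -/
import Mathlib

section
/- Let k be a field of characteristic 2 and let n be an odd positive integer. Then PGL_2(k) contains a subgroup isomorphic to the dihedral group of order 2n if and only if there exists a primitive n-th root of unity ζ in an algebraic closure of k such that ζ + ζ^{-1} lies in the image of k in that algebraic closure. -/
open Matrix

/-- `PGL₂ k`: the projective general linear group, i.e. `GL(2,k)` modulo its center
(the scalar matrices). -/
abbrev PGL2 (k : Type*) [Field k] : Type _ :=
  GL (Fin 2) k ⧸ Subgroup.center (GL (Fin 2) k)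

namespace DihedralAux
variable {k : Type*} [Field k]

/-- explicit unit for an invertible 2x2 matrix -/
lemma coe_nonsingInvUnit (M : Matrix (Fin 2) (Fin 2) k) (h : IsUnit M.det) :
    ((Matrix.nonsingInvUnit M h : (Matrix (Fin 2) (Fin 2) k)ˣ) : Matrix (Fin 2) (Fin 2) k) = M := rfl

lemma mem_center_GL2 (M : GL (Fin 2) k) :
    M ∈ Subgroup.center (GL (Fin 2) k) ↔
      ∃ c : k, (M : Matrix (Fin 2) (Fin 2) k) = c • 1 := by
  constructor
  · intro hM
    rw [Subgroup.mem_center_iff] at hM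
    have hdet1 : ((!![1,1;0,1] : Matrix (Fin 2) (Fin 2) k)).det ≠ 0 := by
      simp [Matrix.det_fin_two]
    have hdet2 : ((!![1,0;1,1] : Matrix (Fin 2) (Fin 2) k)).det ≠ 0 := by
      simp [Matrix.det_fin_two]
    set u1 : GL (Fin 2) k := Matrix.nonsingInvUnit _ (isUnit_iff_ne_zero.2 hdet1) with hu1
    set u2 : GL (Fin 2) k := Matrix.nonsingInvUnit _ (isUnit_iff_ne_zero.2 hdet2) with hu2
    have h1 := hM u1
    have h2 := hM u2
    have h1' : (u1 : Matrix (Fin 2) (Fin 2) k) * M = M * u1 := by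
      rw [← Units.val_mul, ← Units.val_mul, h1]
    have h2' : (u2 : Matrix (Fin 2) (Fin 2) k) * M = M * u2 := by
      rw [← Units.val_mul, ← Units.val_mul, h2]
    rw [hu1, coe_nonsingInvUnit] at h1'
    rw [hu2, coe_nonsingInvUnit] at h2'
    have e10 : (M : Matrix (Fin 2) (Fin 2) k) 1 0 = 0 := by
      have := congrFun (congrFun h1' 0) 0
      simp [Matrix.mul_apply, Fin.sum_univ_two] at this
      exact this
    have e01 : (M : Matrix (Fin 2) (Fin 2) k) 0 1 = 0 := by
      have := congrFun (congrFun h2' 0) 0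
      simp [Matrix.mul_apply, Fin.sum_univ_two] at this
      exact this
    have e00 : (M : Matrix (Fin 2) (Fin 2) k) 0 0 = (M : Matrix (Fin 2) (Fin 2) k) 1 1 := by
      have := congrFun (congrFun h1' 0) 1
      simp [Matrix.mul_apply, Fin.sum_univ_two] at this
      linear_combination -this
    refine ⟨(M : Matrix (Fin 2) (Fin 2) k) 0 0, ?_⟩
    ext i j
    fin_cases i <;> fin_cases j <;>
      simp [Matrix.one_apply, e10, e01, e00.symm]
  · rintro ⟨c, hc⟩
    rw [Subgroup.mem_center_iff]
    intro g
    ext : 1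
    rw [Units.val_mul, Units.val_mul, hc]
    rw [Matrix.mul_smul, Matrix.smul_mul, mul_one, one_mul]

end DihedralAux

namespace DihedralAux
variable {k : Type*} [Field k]

/-- coefficient sequences for powers of a root of `X² = tX + d` -/
def sAB (t d : k) : ℕ → k × k
  | 0 => (0, 1)
  | m + 1 => (t * (sAB t d m).1 + (sAB t d m).2, d * (sAB t d m).1)

lemma pow_eq_sAB (t d : k) {R : Type*} [Ring R] [Algebra k R] (x : R)
    (hx : x ^ 2 = t • x + d • (1 : R)) (m : ℕ) :
    x ^ m = (sAB t d m).1 • x + (sAB t d m).2 • (1 : R) := by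
  induction m with
  | zero => simp [sAB]
  | succ m ih =>
      rw [pow_succ, ih, sAB]
      rw [add_mul, smul_mul_assoc, smul_mul_assoc, one_mul, ← pow_two, hx]
      simp only [smul_add, smul_smul]
      module

lemma pow_eq_sAB_field {K : Type*} [Field K] [Algebra k K] (t d : k) (x : K)
    (hx : x ^ 2 = algebraMap k K t * x + algebraMap k K d) (m : ℕ) :
    x ^ m = algebraMap k K (sAB t d m).1 * x + algebraMap k K (sAB t d m).2 := by
  have := pow_eq_sAB t d x (by rw [Algebra.smul_def, Algebra.smul_def, mul_one]; exact hx) m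
  rwa [Algebra.smul_def, Algebra.smul_def, mul_one] at this

lemma pgl_mk_pow_eq_one_iff (A : GL (Fin 2) k) (m : ℕ) :
    ((QuotientGroup.mk A : PGL2 k) ^ m = 1) ↔
      ∃ c : k, ((A : Matrix (Fin 2) (Fin 2) k)) ^ m = c • 1 := by
  rw [← QuotientGroup.mk_pow, QuotientGroup.eq_one_iff, mem_center_GL2]
  constructor
  · rintro ⟨c, hc⟩
    exact ⟨c, by rw [← Units.val_pow_eq_pow_val]; exact hc⟩
  · rintro ⟨c, hc⟩
    exact ⟨c, by rw [Units.val_pow_eq_pow_val]; exact hc⟩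

/-- abstract construction of a dihedral subgroup from generators -/
lemma dihedral_of_gen {G : Type*} [Group G] (n : ℕ) (hn : 0 < n) (x y : G)
    (hx : orderOf x = n) (hy : y * y = 1) (hrel : y * x * y = x⁻¹)
    (hdisj : ∀ m : ℕ, y ≠ x ^ m) :
    ∃ H : Subgroup G, Nonempty (H ≃* DihedralGroup n) := by
  haveI : NeZero n := ⟨hn.ne'⟩
  have hxn : x ^ n = 1 := by rw [← hx]; exact pow_orderOf_eq_one x
  set χ : ZMod n → G := fun i => x ^ i.val with hχ
  have hχadd : ∀ i j : ZMod n, χ (i + j) = χ i * χ j := by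
    intro i j
    rw [hχ, ← pow_add]
    apply pow_eq_pow_iff_modEq.2
    rw [hx]
    have h : (i + j).val = (i.val + j.val) % n := ZMod.val_add i j
    rw [h]
    exact Nat.mod_modEq _ n
  have hχ0 : χ 0 = 1 := by simp [hχ]
  have hχneg : ∀ i : ZMod n, χ (-i) = (χ i)⁻¹ := by
    intro i
    apply eq_inv_of_mul_eq_one_left
    rw [← hχadd, neg_add_cancel, hχ0]
  have h1 : y * x = x⁻¹ * y := by
    have := congrArg (· * y) hrel
    simpa [mul_assoc, hy] using this
  have key : ∀ m : ℕ, y * x ^ m = (x ^ m)⁻¹ * y := by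
    intro m
    induction m with
    | zero => simp
    | succ m ih =>
        rw [pow_succ, ← mul_assoc, ih, mul_assoc, h1]
        group
  have hyx : ∀ i : ZMod n, y * χ i = χ (-i) * y := by
    intro i
    rw [hχneg, hχ]
    exact key i.val
  have hχinj : Function.Injective χ := by
    intro i j hij
    have := pow_eq_pow_iff_modEq.1 hij
    rw [hx] at this
    have hi : i.val % n = j.val % n := this
    rw [Nat.mod_eq_of_lt (ZMod.val_lt i), Nat.mod_eq_of_lt (ZMod.val_lt j)] at hi
    exact ZMod.val_injective n hi
  have hyx' : ∀ i : ZMod n, χ i * y = y * χ (-i) := by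
    intro i
    rw [hyx, neg_neg]
  have hynotχ : ∀ i : ZMod n, y ≠ χ i := fun i h => hdisj i.val h
  let F : DihedralGroup n →* G :=
    { toFun := fun g => match g with
        | .r i => χ i
        | .sr i => y * χ i
      map_one' := by
        show χ 0 = 1
        exact hχ0
      map_mul' := by
        rintro (i | i) (j | j)
        · show χ (i + j) = χ i * χ j
          exact hχadd i j
        · show y * χ (j - i) = χ i * (y * χ j)
          rw [← mul_assoc, hyx' i, mul_assoc, ← hχadd, sub_eq_neg_add]
        · show y * χ (i + j) = y * χ i * χ j
          rw [mul_assoc, hχadd]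
        · show χ (j - i) = y * χ i * (y * χ j)
          rw [mul_assoc, ← mul_assoc (χ i), hyx' i, ← mul_assoc, ← mul_assoc, hy,
            one_mul, ← hχadd, sub_eq_neg_add]
      }
  have hFinj : Function.Injective F := by
    rintro (i | i) (j | j) hij
    · exact congrArg DihedralGroup.r (hχinj hij)
    · exfalso
      have hij' : χ i = y * χ j := hij
      apply hynotχ (i - j)
      have h2 : y = χ i * (χ j)⁻¹ := by
        rw [hij', mul_assoc, mul_inv_cancel, mul_one]
      rw [h2, ← hχneg, ← hχadd, sub_eq_add_neg]
    · exfalso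
      have hij' : y * χ i = χ j := hij
      apply hynotχ (j - i)
      have h2 : y = χ j * (χ i)⁻¹ := by
        rw [← hij', mul_assoc, mul_inv_cancel, mul_one]
      rw [h2, ← hχneg, ← hχadd, sub_eq_add_neg]
    · have : y * χ i = y * χ j := hij
      exact congrArg DihedralGroup.sr (hχinj (mul_left_cancel this))
  exact ⟨F.range, ⟨(MonoidHom.ofInjective hFinj).symm⟩⟩

end DihedralAux


namespace DihedralAux
variable {k : Type*} [Field k]

section CharTwoBack
variable [CharP k 2]

lemma backward {K : Type*} [Field K] [Algebra k K] [CharP K 2]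
    (n : ℕ) (hn : 0 < n) (hodd : Odd n)
    (ζ : K) (hζ : IsPrimitiveRoot ζ n)
    (s : k) (hs : algebraMap k K s = ζ + ζ⁻¹) :
    ∃ H : Subgroup (PGL2 k), Nonempty (H ≃* DihedralGroup n) := by
  have h2k : (2 : k) = 0 := by exact_mod_cast CharP.cast_eq_zero k 2
  have h2K : (2 : K) = 0 := by exact_mod_cast CharP.cast_eq_zero K 2
  -- the reflection
  have hdetB : (!![0,1;1,0] : Matrix (Fin 2) (Fin 2) k).det ≠ 0 := by
    simp [Matrix.det_fin_two]
  set BU : GL (Fin 2) k := Matrix.nonsingInvUnit _ (isUnit_iff_ne_zero.2 hdetB) with hBU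
  set y : PGL2 k := QuotientGroup.mk BU with hy'
  have hBsq : BU * BU = 1 := by
    ext : 1
    rw [Units.val_mul, hBU, coe_nonsingInvUnit]
    ext i j
    fin_cases i <;> fin_cases j <;>
      simp [Matrix.mul_apply, Fin.sum_univ_two, Matrix.one_apply]
  have hyy : y * y = 1 := by
    rw [hy', ← QuotientGroup.mk_mul, hBsq]
    rfl
  have hyne1 : y ≠ 1 := by
    rw [hy', Ne, QuotientGroup.eq_one_iff, mem_center_GL2]
    rintro ⟨c, hc⟩
    have := congrFun (congrFun hc 0) 1
    rw [hBU, coe_nonsingInvUnit] at this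
    simp [Matrix.one_apply] at this
  rcases eq_or_ne n 1 with rfl | hn1
  · refine dihedral_of_gen 1 one_pos 1 y (orderOf_one) hyy (by rw [mul_one, inv_one, hyy]) ?_
    intro m
    rw [one_pow]
    exact hyne1
  -- now n ≥ 2 (and odd)
  have hζ0 : ζ ≠ 0 := hζ.ne_zero hn.ne'
  have hζ2 : ζ ^ 2 ≠ 1 := by
    intro h
    have hdvd : n ∣ 2 := hζ.dvd_of_pow_eq_one 2 h
    have : n ∣ 1 := by
      have := Nat.dvd_gcd (dvd_refl n) hdvd
      rwa [Nat.Coprime.gcd_eq_one hodd.coprime_two_right] at this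
    exact hn1 (Nat.dvd_one.1 this)
  have hinv : ζ * ζ⁻¹ = 1 := mul_inv_cancel₀ hζ0
  have hζζ : ζ ≠ ζ⁻¹ := by
    intro h
    apply hζ2
    rw [pow_two]
    nth_rewrite 2 [h]
    exact hinv
  have hsne : s ≠ 0 := by
    intro h
    rw [h, map_zero] at hs
    apply hζζ
    have : ζ = -ζ⁻¹ := by linear_combination -hs
    rwa [CharTwo.neg_eq] at this
  -- the rotation
  have hdetA : (!![0,1;1,s] : Matrix (Fin 2) (Fin 2) k).det ≠ 0 := by
    simp [Matrix.det_fin_two]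
  set AU : GL (Fin 2) k := Matrix.nonsingInvUnit _ (isUnit_iff_ne_zero.2 hdetA) with hAU
  set x : PGL2 k := QuotientGroup.mk AU with hx'
  set Amat : Matrix (Fin 2) (Fin 2) k := !![0,1;1,s] with hAmat
  have hA2 : Amat ^ 2 = s • Amat + (1 : k) • (1 : Matrix (Fin 2) (Fin 2) k) := by
    rw [pow_two]
    ext i j
    fin_cases i <;> fin_cases j <;>
      simp [hAmat, Matrix.mul_apply, Fin.sum_univ_two, Matrix.one_apply] <;> ring
  have ham := pow_eq_sAB s 1 Amat hA2
  have hone : algebraMap k K 1 = 1 := map_one _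
  have hζq : ζ ^ 2 = algebraMap k K s * ζ + algebraMap k K 1 := by
    rw [hone, hs]
    linear_combination -hinv - h2K
  have hζiq : ζ⁻¹ ^ 2 = algebraMap k K s * ζ⁻¹ + algebraMap k K 1 := by
    rw [hone, hs]
    linear_combination -hinv - h2K
  have hζm := pow_eq_sAB_field s 1 ζ hζq
  have hζim := pow_eq_sAB_field s 1 ζ⁻¹ hζiq
  have hφinj : Function.Injective (algebraMap k K) := (algebraMap k K).injective
  have hazero : ∀ m : ℕ, (sAB s 1 m).1 = 0 ↔ n ∣ m := by
    intro m
    constructor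
    · intro h
      have h1 : ζ ^ m = algebraMap k K (sAB s 1 m).2 := by
        rw [hζm m, h, map_zero, zero_mul, zero_add]
      have h2 : ζ⁻¹ ^ m = algebraMap k K (sAB s 1 m).2 := by
        rw [hζim m, h, map_zero, zero_mul, zero_add]
      have h3 : ζ ^ m * ζ ^ m = 1 := by
        nth_rewrite 2 [h1]
        rw [← h2, inv_pow, mul_inv_cancel₀ (pow_ne_zero m hζ0)]
      have h4 : ζ ^ (m * 2) = 1 := by rw [pow_mul, pow_two, h3]
      exact hodd.coprime_two_right.dvd_of_dvd_mul_right (hζ.dvd_of_pow_eq_one _ h4)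
    · intro h
      have h1 : ζ ^ m = 1 := hζ.pow_eq_one_iff_dvd m |>.2 h
      have h2 : ζ⁻¹ ^ m = 1 := by rw [inv_pow, h1, inv_one]
      have h3 : algebraMap k K (sAB s 1 m).1 * (ζ - ζ⁻¹) = 0 := by
        have hh := (hζm m).symm.trans (h1.trans (h2.symm.trans (hζim m)))
        linear_combination hh
      rcases mul_eq_zero.1 h3 with h5 | h5
      · exact hφinj (by rw [h5, map_zero])
      · exact absurd (sub_eq_zero.1 h5) hζζ
  have hxm : ∀ m : ℕ, x ^ m = 1 ↔ n ∣ m := by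
    intro m
    rw [hx', pgl_mk_pow_eq_one_iff, hAU, coe_nonsingInvUnit, ← hAmat]
    constructor
    · rintro ⟨c, hc⟩
      rw [ham m] at hc
      have := congrFun (congrFun hc 0) 1
      simp [hAmat, Matrix.one_apply] at this
      exact (hazero m).1 this
    · intro h
      exact ⟨(sAB s 1 m).2, by rw [ham m, (hazero m).2 h, zero_smul, zero_add]⟩
  have hx : orderOf x = n := by
    apply Nat.dvd_antisymm
    · exact orderOf_dvd_of_pow_eq_one ((hxm n).2 dvd_rfl)
    · exact (hxm (orderOf x)).1 (pow_orderOf_eq_one x)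
  have hrel : y * x * y = x⁻¹ := by
    have hGL : AU * (BU * AU * BU) = 1 := by
      ext : 1
      rw [Units.val_mul, Units.val_mul, Units.val_mul, hAU, hBU, coe_nonsingInvUnit,
        coe_nonsingInvUnit]
      ext i j
      fin_cases i <;> fin_cases j <;>
        simp [Matrix.mul_apply, Fin.sum_univ_two, Matrix.one_apply] <;>
        linear_combination s * h2k
    have hGL' : BU * AU * BU = AU⁻¹ := eq_inv_of_mul_eq_one_right hGL
    rw [hy', hx', ← QuotientGroup.mk_mul, ← QuotientGroup.mk_mul, hGL', QuotientGroup.mk_inv]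
  have hdisj : ∀ m : ℕ, y ≠ x ^ m := by
    intro m h
    rw [hy', hx', ← QuotientGroup.mk_pow] at h
    have hmem := QuotientGroup.eq.1 h.symm
    rw [mem_center_GL2] at hmem
    obtain ⟨c, hc⟩ := hmem
    have hgrp : AU ^ m * ((AU ^ m)⁻¹ * BU) = BU := mul_inv_cancel_left _ _
    have hcoe := congrArg (Units.val) hgrp
    rw [Units.val_mul, hc, Units.val_pow_eq_pow_val, hAU, hBU, coe_nonsingInvUnit,
      coe_nonsingInvUnit, ← hAmat, ham m] at hcoe
    have e00 := congrFun (congrFun hcoe 0) 0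
    have e01 := congrFun (congrFun hcoe 0) 1
    have e11 := congrFun (congrFun hcoe 1) 1
    simp [hAmat, Matrix.mul_apply, Fin.sum_univ_two, Matrix.one_apply] at e00 e01 e11
    apply hsne
    have hc0 : c ≠ 0 := by
      intro hh
      rw [hh, mul_zero] at e01
      exact one_ne_zero e01.symm
    have ha0 : (sAB s 1 m).1 ≠ 0 := by
      intro hh
      rw [hh, zero_mul] at e01
      exact one_ne_zero e01.symm
    have hb0 : (sAB s 1 m).2 = 0 := e00.resolve_right hc0
    have h11 : (sAB s 1 m).1 * s + (sAB s 1 m).2 = 0 := e11.resolve_right hc0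
    rw [hb0, add_zero] at h11
    exact (mul_eq_zero.1 h11).resolve_left ha0
  exact dihedral_of_gen n hn x y hx hyy hrel hdisj

end CharTwoBack
end DihedralAux

namespace DihedralAux
variable {k : Type*} [Field k] [CharP k 2]

lemma forward_core (n : ℕ) (hn1 : 1 < n) (hodd : Odd n) (x : PGL2 k) (hx : orderOf x = n) :
    ∃ ζ : AlgebraicClosure k, IsPrimitiveRoot ζ n ∧
      ζ + ζ⁻¹ ∈ (algebraMap k (AlgebraicClosure k)).range := by
  have h2k : (2 : k) = 0 := by exact_mod_cast CharP.cast_eq_zero k 2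
  have h2K : (2 : AlgebraicClosure k) = 0 := by
    exact_mod_cast CharP.cast_eq_zero (AlgebraicClosure k) 2
  obtain ⟨A, rfl⟩ := QuotientGroup.mk_surjective x
  set Amat : Matrix (Fin 2) (Fin 2) k := (A : Matrix (Fin 2) (Fin 2) k) with hAmat
  set t : k := Amat.trace with ht'
  set d : k := Amat.det with hd'
  have hd0 : d ≠ 0 := by
    have h1 : Amat * (↑A⁻¹ : Matrix (Fin 2) (Fin 2) k) = 1 := by
      rw [hAmat, ← Units.val_mul, mul_inv_cancel, Units.val_one]
    have h2 := congrArg Matrix.det h1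
    rw [Matrix.det_mul, Matrix.det_one] at h2
    exact left_ne_zero_of_mul_eq_one h2
  have hCH : Amat ^ 2 = t • Amat + d • (1 : Matrix (Fin 2) (Fin 2) k) := by
    have h0 : Amat * Amat + Amat.det • (1 : Matrix (Fin 2) (Fin 2) k) = Amat.trace • Amat := by
      ext i j
      fin_cases i <;> fin_cases j <;>
        simp [Matrix.mul_apply, Fin.sum_univ_two, Matrix.trace_fin_two, Matrix.det_fin_two,
          Matrix.one_apply] <;>
        ring
    have h1 : Amat.det + Amat.det = 0 := by linear_combination Amat.det * h2k
    rw [ht', hd', pow_two, ← h0, add_assoc, ← add_smul, h1, zero_smul, add_zero]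
  rcases eq_or_ne t 0 with ht0 | ht0
  · -- trace zero: the element has order dividing 2, contradiction
    exfalso
    have hsq : (QuotientGroup.mk A : PGL2 k) ^ 2 = 1 := by
      rw [pgl_mk_pow_eq_one_iff]
      exact ⟨d, by rw [← hAmat, hCH, ht0, zero_smul, zero_add]⟩
    have hdvd := orderOf_dvd_of_pow_eq_one hsq
    rw [hx] at hdvd
    have : n ∣ 1 := by
      have := Nat.dvd_gcd (dvd_refl n) hdvd
      rwa [Nat.Coprime.gcd_eq_one hodd.coprime_two_right] at this
    exact absurd (Nat.dvd_one.1 this) (by omega)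
  · -- trace nonzero: diagonalizable with distinct eigenvalue ratio
    set φ : k →+* AlgebraicClosure k := algebraMap k (AlgebraicClosure k) with hφ
    have hφinj : Function.Injective φ := φ.injective
    obtain ⟨lam, hlam⟩ : ∃ z : AlgebraicClosure k, z ^ 2 = φ t * z + φ d := by
      obtain ⟨z, hz⟩ := IsAlgClosed.exists_root
        (Polynomial.C (1 : AlgebraicClosure k) * Polynomial.X ^ 2
          + Polynomial.C (φ t) * Polynomial.X + Polynomial.C (φ d))
        (by rw [Polynomial.degree_quadratic one_ne_zero]; exact (by norm_num))
      refine ⟨z, ?_⟩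
      have := hz
      simp only [Polynomial.IsRoot, Polynomial.eval_add, Polynomial.eval_mul,
        Polynomial.eval_pow, Polynomial.eval_C, Polynomial.eval_X, one_mul] at this
      linear_combination this - (φ t * z + φ d) * h2K
    set mu : AlgebraicClosure k := φ t + lam with hmu'
    have hmu : mu ^ 2 = φ t * mu + φ d := by
      rw [hmu']
      linear_combination hlam + (φ t * lam) * h2K
    have hdK : φ d ≠ 0 := fun h => hd0 (hφinj (by rw [h, map_zero]))
    have htK : φ t ≠ 0 := fun h => ht0 (hφinj (by rw [h, map_zero]))
    have hlam0 : lam ≠ 0 := by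
      intro h
      rw [h] at hlam
      simp at hlam
      exact hdK hlam.symm
    have hmu0 : mu ≠ 0 := by
      intro h
      rw [h] at hmu
      simp at hmu
      exact hdK hmu.symm
    have hlm : lam ≠ mu := by
      intro h
      apply htK
      rw [hmu'] at h
      nth_rewrite 1 [← zero_add lam] at h
      exact (add_right_cancel h).symm
    have hlmul : lam * mu = φ d := by
      rw [hmu']
      linear_combination hlam + (φ t * lam) * h2K
    set ζ : AlgebraicClosure k := lam * mu⁻¹ with hζ'
    have ham := pow_eq_sAB t d Amat hCH
    have hlamm := pow_eq_sAB_field t d lam hlam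
    have hmum := pow_eq_sAB_field t d mu hmu
    have hAns : ∀ c : k, Amat ≠ c • 1 := by
      intro c hc
      apply ht0
      rw [ht', hc, Matrix.trace_smul, Matrix.trace_one]
      simp only [smul_eq_mul, Fintype.card_fin, Nat.cast_ofNat]
      linear_combination c * h2k
    have key : ∀ m : ℕ, ((QuotientGroup.mk A : PGL2 k) ^ m = 1) ↔ ζ ^ m = 1 := by
      intro m
      rw [pgl_mk_pow_eq_one_iff, ← hAmat]
      have step1 : (∃ c : k, Amat ^ m = c • 1) ↔ (sAB t d m).1 = 0 := by
        constructor
        · rintro ⟨c, hc⟩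
          rw [ham m] at hc
          by_contra haz
          apply hAns ((sAB t d m).1⁻¹ * (c - (sAB t d m).2))
          have : (sAB t d m).1 • Amat = (c - (sAB t d m).2) • (1 : Matrix (Fin 2) (Fin 2) k) := by
            rw [sub_smul]
            rw [← hc]
            abel
          calc Amat = (sAB t d m).1⁻¹ • ((sAB t d m).1 • Amat) := by
                rw [smul_smul, inv_mul_cancel₀ haz, one_smul]
            _ = ((sAB t d m).1⁻¹ * (c - (sAB t d m).2)) • (1 : Matrix (Fin 2) (Fin 2) k) := by
                rw [this, smul_smul]
        · intro h
          exact ⟨(sAB t d m).2, by rw [ham m, h, zero_smul, zero_add]⟩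
      have step2 : (sAB t d m).1 = 0 ↔ lam ^ m = mu ^ m := by
        constructor
        · intro h
          rw [hlamm m, hmum m, h, map_zero, zero_mul, zero_mul]
        · intro h
          rw [hlamm m, hmum m] at h
          have h4 : φ (sAB t d m).1 * (lam - mu) = 0 := by linear_combination h
          rcases mul_eq_zero.1 h4 with h5 | h5
          · exact hφinj (by rw [h5, map_zero])
          · exact absurd (sub_eq_zero.1 h5) hlm
      have step3 : ζ ^ m = 1 ↔ lam ^ m = mu ^ m := by
        rw [hζ', mul_pow, inv_pow]
        exact mul_inv_eq_one₀ (pow_ne_zero m hmu0)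
      rw [step1, step2, step3]
    refine ⟨ζ, ⟨?_, ?_⟩, ⟨t ^ 2 / d, ?_⟩⟩
    · exact (key n).1 (by rw [← hx]; exact pow_orderOf_eq_one _)
    · intro l hl
      rw [← hx]
      exact orderOf_dvd_of_pow_eq_one ((key l).2 hl)
    · have hζinv : ζ⁻¹ = mu * lam⁻¹ := by
        rw [hζ', mul_inv, inv_inv, mul_comm]
      have hsum : lam + mu = φ t := by
        rw [hmu']
        linear_combination lam * h2K
      have hsq : (φ t) ^ 2 = lam ^ 2 + mu ^ 2 := by
        linear_combination (-(lam + mu + φ t)) * hsum + (lam * mu) * h2K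
      rw [map_div₀, map_pow, hsq, ← hlmul, hζ', hζinv]
      field_simp
  
end DihedralAux

/-- **Existence of dihedral subgroups in characteristic 2.**
Let `k` be a field of characteristic `2` and `n` an odd positive integer.  Then `PGL₂(k)`
contains a subgroup isomorphic to the dihedral group of order `2n` if and only if there is a
primitive `n`-th root of unity `ζ` in an algebraic closure of `k` with `ζ + ζ⁻¹` lying in
the image of `k`. -/
theorem dihedral_subgroup_exists_iff_char_two
    (k : Type) [Field k] [CharP k 2] (n : ℕ) (hn : 0 < n) (hodd : Odd n) :
    (∃ H : Subgroup (PGL2 k), Nonempty (H ≃* DihedralGroup n)) ↔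
      (∃ ζ : AlgebraicClosure k, IsPrimitiveRoot ζ n ∧
        ζ + ζ⁻¹ ∈ (algebraMap k (AlgebraicClosure k)).range) := by
  constructor
  · rintro ⟨H, ⟨e⟩⟩
    rcases eq_or_ne n 1 with rfl | hn1
    · refine ⟨1, ⟨one_pow 1, fun l _ => one_dvd l⟩, ⟨0, ?_⟩⟩
      have h2K : (2 : AlgebraicClosure k) = 0 := by
        exact_mod_cast CharP.cast_eq_zero (AlgebraicClosure k) 2
      rw [map_zero, inv_one]
      linear_combination -h2K
    · have hr : orderOf (DihedralGroup.r 1 : DihedralGroup n) = n :=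
        DihedralGroup.orderOf_r_one
      set xH : H := e.symm (DihedralGroup.r 1) with hxH
      have h1 : orderOf xH = n := by
        have h0 := orderOf_injective e.symm.toMonoidHom e.symm.injective (DihedralGroup.r 1)
        rw [hr] at h0
        exact h0
      have h2 : orderOf ((xH : PGL2 k)) = n := by
        rw [← h1]
        exact orderOf_injective H.subtype H.subtype_injective xH
      exact DihedralAux.forward_core n (by omega) hodd _ h2
  · rintro ⟨ζ, hζ, ⟨s, hs⟩⟩
    exact DihedralAux.backward n hn hodd ζ hζ s hs
end

section
/- Let k be an algebraically closed field, let s be a nontrivial element of PGL_2(k), and let A ∈ GL(2,k) be any matrix representing s. Then: s has order 2 if and only if trace(A) = 0; s has order 3 if and only if (trace A)^2 = det(A); and s has order 5 if and only if (trace A)^4 − 3·(trace A)^2·det(A) + (det A)^2 = 0. -/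
open Matrix

section Aux

variable {k : Type} [Field k]

/-- Cayley–Hamilton for 2×2 matrices. -/
lemma sq_eq_trace_smul_sub_det_smul' (M : Matrix (Fin 2) (Fin 2) k) :
    M * M = M.trace • M - M.det • (1 : Matrix (Fin 2) (Fin 2) k) := by
  rw [Matrix.eta_fin_two M]
  ext i j
  fin_cases i <;> fin_cases j <;>
    simp [Matrix.mul_apply, Matrix.det_fin_two, Matrix.trace_fin_two, Fin.sum_univ_two,
      Matrix.one_apply] <;> ring

lemma mem_center_GL2_iff (A : GL (Fin 2) k) :
    A ∈ Subgroup.center (GL (Fin 2) k) ↔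
      ∃ r : k, (A : Matrix (Fin 2) (Fin 2) k) = r • (1 : Matrix (Fin 2) (Fin 2) k) := by
  constructor
  · intro h
    have hc := Subgroup.mem_center_iff.mp h
    set B₁ : GL (Fin 2) k := Matrix.GeneralLinearGroup.mkOfDetNeZero !![1, 1; 0, 1]
      (by simp [Matrix.det_fin_two_of]) with hB₁
    set B₂ : GL (Fin 2) k := Matrix.GeneralLinearGroup.mkOfDetNeZero !![1, 0; 1, 1]
      (by simp [Matrix.det_fin_two_of]) with hB₂
    have h1 : (B₁ : Matrix (Fin 2) (Fin 2) k) * A = (A : Matrix (Fin 2) (Fin 2) k) * B₁ := by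
      have := hc B₁
      exact_mod_cast congrArg (Units.val) this
    have h2 : (B₂ : Matrix (Fin 2) (Fin 2) k) * A = (A : Matrix (Fin 2) (Fin 2) k) * B₂ := by
      have := hc B₂
      exact_mod_cast congrArg (Units.val) this
    have hB₁v : (B₁ : Matrix (Fin 2) (Fin 2) k) = !![1, 1; 0, 1] := rfl
    have hB₂v : (B₂ : Matrix (Fin 2) (Fin 2) k) = !![1, 0; 1, 1] := rfl
    rw [hB₁v, Matrix.eta_fin_two (A : Matrix (Fin 2) (Fin 2) k)] at h1
    rw [hB₂v, Matrix.eta_fin_two (A : Matrix (Fin 2) (Fin 2) k)] at h2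
    set a := (A : Matrix (Fin 2) (Fin 2) k) 0 0 with ha
    set b := (A : Matrix (Fin 2) (Fin 2) k) 0 1 with hb
    set c := (A : Matrix (Fin 2) (Fin 2) k) 1 0 with hcc
    set d := (A : Matrix (Fin 2) (Fin 2) k) 1 1 with hdd
    rw [Matrix.mul_fin_two, Matrix.mul_fin_two, ← Matrix.ext_iff] at h1 h2
    simp [Fin.forall_fin_two] at h1 h2
    have hc0 : c = 0 := by linear_combination h1.1.1
    have had : a = d := by linear_combination -h1.1.2
    have hb0 : b = 0 := h2.1
    refine ⟨a, ?_⟩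
    rw [Matrix.eta_fin_two (A : Matrix (Fin 2) (Fin 2) k), ← ha, ← hb, ← hcc, ← hdd,
      hb0, hc0, ← had]
    ext i j
    fin_cases i <;> fin_cases j <;> simp [Matrix.one_apply]
  · rintro ⟨r, hr⟩
    refine Subgroup.mem_center_iff.mpr fun B => ?_
    ext
    show ((B * A : GL (Fin 2) k) : Matrix (Fin 2) (Fin 2) k) _ _
      = ((A * B : GL (Fin 2) k) : Matrix (Fin 2) (Fin 2) k) _ _
    have : ((B * A : GL (Fin 2) k) : Matrix (Fin 2) (Fin 2) k)
        = ((A * B : GL (Fin 2) k) : Matrix (Fin 2) (Fin 2) k) := by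
      push_cast
      rw [hr]
      simp [Matrix.mul_smul, Matrix.smul_mul]
    rw [this]

lemma scalar_iff_of_nonscalar (M : Matrix (Fin 2) (Fin 2) k)
    (hM : ¬∃ r : k, M = r • (1 : Matrix (Fin 2) (Fin 2) k)) (c e : k) :
    (∃ r : k, c • M + e • (1 : Matrix (Fin 2) (Fin 2) k) = r • 1) ↔ c = 0 := by
  constructor
  · rintro ⟨r, hr⟩
    by_contra hc
    refine hM ⟨c⁻¹ * (r - e), ?_⟩
    have : c • M = (r - e) • (1 : Matrix (Fin 2) (Fin 2) k) := by
      rw [sub_smul, ← hr]; abel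
    calc M = c⁻¹ • (c • M) := by rw [smul_smul, inv_mul_cancel₀ hc, one_smul]
      _ = c⁻¹ • ((r - e) • (1 : Matrix (Fin 2) (Fin 2) k)) := by rw [this]
      _ = (c⁻¹ * (r - e)) • (1 : Matrix (Fin 2) (Fin 2) k) := by rw [smul_smul]
  · rintro rfl
    exact ⟨e, by simp⟩

end Aux

/-- **Trace/determinant criteria for elements of order 2, 3 and 5.**
Let `k` be an algebraically closed field, let `s ∈ PGL₂(k)` be nontrivial and let
`A ∈ GL(2,k)` represent `s`.  Then `s` has order 2 iff `tr A = 0`; order 3 iff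
`(tr A)² = det A`; and order 5 iff `(tr A)⁴ − 3 (tr A)² det A + (det A)² = 0`. -/
theorem orderOf_eq_two_three_five_iff_trace_det
    (k : Type) [Field k] [IsAlgClosed k]
    (s : PGL2 k) (hs : s ≠ 1)
    (A : GL (Fin 2) k) (hA : (QuotientGroup.mk A : PGL2 k) = s) :
    (orderOf s = 2 ↔ (A : Matrix (Fin 2) (Fin 2) k).trace = 0) ∧
    (orderOf s = 3 ↔
      (A : Matrix (Fin 2) (Fin 2) k).trace ^ 2 = (A : Matrix (Fin 2) (Fin 2) k).det) ∧
    (orderOf s = 5 ↔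
      (A : Matrix (Fin 2) (Fin 2) k).trace ^ 4
          - 3 * (A : Matrix (Fin 2) (Fin 2) k).trace ^ 2 * (A : Matrix (Fin 2) (Fin 2) k).det
          + (A : Matrix (Fin 2) (Fin 2) k).det ^ 2 = 0) := by
  subst hA
  set M := (A : Matrix (Fin 2) (Fin 2) k) with hMdef
  set t := M.trace with ht
  set d := M.det with hd
  have hns : ¬∃ r : k, M = r • (1 : Matrix (Fin 2) (Fin 2) k) := by
    rw [← mem_center_GL2_iff]
    intro h
    exact hs ((QuotientGroup.eq_one_iff A).mpr h)
  have hCH : M * M = t • M - d • (1 : Matrix (Fin 2) (Fin 2) k) :=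
    sq_eq_trace_smul_sub_det_smul' M
  have hM2 : M ^ 2 = t • M + (-d) • (1 : Matrix (Fin 2) (Fin 2) k) := by
    rw [pow_two, hCH, sub_eq_add_neg, neg_smul]
  have hM3 : M ^ 3 = (t ^ 2 - d) • M + (-(d * t)) • (1 : Matrix (Fin 2) (Fin 2) k) := by
    rw [pow_succ, hM2, add_mul, smul_mul_assoc, smul_mul_assoc, one_mul, hCH]
    match_scalars <;> ring
  have hM4 : M ^ 4 = (t ^ 3 - 2 * d * t) • M
      + (-(d * (t ^ 2 - d))) • (1 : Matrix (Fin 2) (Fin 2) k) := by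
    rw [show (4 : ℕ) = 3 + 1 from rfl, pow_succ, hM3, add_mul, smul_mul_assoc,
      smul_mul_assoc, one_mul, hCH]
    match_scalars <;> ring
  have hM5 : M ^ 5 = (t ^ 4 - 3 * t ^ 2 * d + d ^ 2) • M
      + (2 * d ^ 2 * t - d * t ^ 3) • (1 : Matrix (Fin 2) (Fin 2) k) := by
    rw [show (5 : ℕ) = 4 + 1 from rfl, pow_succ, hM4, add_mul, smul_mul_assoc,
      smul_mul_assoc, one_mul, hCH]
    match_scalars <;> ring
  have key : ∀ (p : ℕ), p.Prime → ∀ c e : k,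
      M ^ p = c • M + e • (1 : Matrix (Fin 2) (Fin 2) k) →
      (orderOf (QuotientGroup.mk A : PGL2 k) = p ↔ c = 0) := by
    intro p hp c e hpe
    have hbr : ((QuotientGroup.mk A : PGL2 k)) ^ p = 1 ↔ c = 0 := by
      have h1 : ((QuotientGroup.mk A : PGL2 k)) ^ p = QuotientGroup.mk (A ^ p) := by
        simp [QuotientGroup.mk_pow]
      rw [h1, QuotientGroup.eq_one_iff, mem_center_GL2_iff]
      have h2 : ((A ^ p : GL (Fin 2) k) : Matrix (Fin 2) (Fin 2) k) = M ^ p :=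
        Units.val_pow_eq_pow_val A p
      rw [h2, hpe]
      exact scalar_iff_of_nonscalar M hns c e
    constructor
    · intro h
      exact hbr.mp (h ▸ pow_orderOf_eq_one _)
    · intro hc
      haveI : Fact p.Prime := ⟨hp⟩
      exact orderOf_eq_prime (hbr.mpr hc) hs
  refine ⟨?_, ?_, ?_⟩
  · exact key 2 (by norm_num) t (-d) hM2
  · rw [key 3 (by norm_num) (t ^ 2 - d) (-(d * t)) hM3, sub_eq_zero]
  · exact key 5 (by norm_num) (t ^ 4 - 3 * t ^ 2 * d + d ^ 2)
      (2 * d ^ 2 * t - d * t ^ 3) hM5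
end
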